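/- Let k ≥ 1 and M ≥ 1 be integers and let z = (z_1, …, z_k) be a vector of integers with 0 ≤ z_i ≤ M for all i. Let u = (u_1, …, u_M) be its type, i.e., u_r = |{i : z_i = r}| for r = 1, …, M. Then z satisfies both conditions (a) Σ_{i=1}^k z_i is even, and (b) z_i ≤ Σ_{ℓ ≠ i} z_ℓ for every i ∈ {1, …, k}, if and only if u satisfies both conditions (S-2) Σ_{r odd} u_r is even, and (S-3) if there exists c ∈ {1, …, M} with u_c = 1 and u_r = 0 for all c < r ≤ M, then c ≤ Σ_{r=1}^{c−1} r·u_r. -/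

import Mathlib

open Finset

/-- Let `k, M ≥ 1` and let `z = (z_1, …, z_k)` be a vector of
integers with `0 ≤ z_i ≤ M`, with type `u` given by `u_r = |{i : z_i = r}|`.
Then (`∑ z_i` even and `z_i ≤ ∑_{ℓ ≠ i} z_ℓ` for all `i`) if and only if
(`∑_{r odd} u_r` even, and whenever `u_c = 1` with `u_r = 0` for all
`c < r ≤ M`, one has `c ≤ ∑_{r=1}^{c-1} r u_r`). -/
theorem stmt_3 (k M : ℕ) (hk : 1 ≤ k) (hM : 1 ≤ M)
    (z : Fin k → ℕ) (hz : ∀ i, z i ≤ M)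
    (u : Fin M → ℕ)
    (hu : ∀ r : Fin M, u r = (Finset.univ.filter fun i : Fin k => z i = (r : ℕ) + 1).card) :
    (Even (∑ i, z i) ∧ ∀ i : Fin k, z i ≤ ∑ ℓ ∈ Finset.univ.erase i, z ℓ) ↔
      (Even (∑ r ∈ Finset.univ.filter (fun r : Fin M => Odd ((r : ℕ) + 1)), u r) ∧
        ∀ c : Fin M, (u c = 1 ∧ ∀ r : Fin M, c < r → u r = 0) →
          (c : ℕ) + 1 ≤ ∑ r ∈ Finset.univ.filter (fun r : Fin M => r < c), ((r : ℕ) + 1) * u r) := by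
  -- sum identity
  have hS : ∑ i, z i = ∑ r : Fin M, ((r : ℕ) + 1) * u r := by
    have h1 : ∀ r : Fin M, ((r : ℕ) + 1) * u r
        = ∑ i : Fin k, if z i = (r : ℕ) + 1 then (r : ℕ) + 1 else 0 := by
      intro r
      rw [hu r, ← Finset.sum_filter, Finset.sum_const, smul_eq_mul, mul_comm]
    rw [Finset.sum_congr rfl fun r _ => h1 r, Finset.sum_comm]
    refine Finset.sum_congr rfl fun i _ => Eq.symm ?_
    by_cases h0 : z i = 0
    · simp [h0]
    · have hzi : z i - 1 < M := by have := hz i; omega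
      set r0 : Fin M := ⟨z i - 1, hzi⟩ with hr0
      have key : ∀ r : Fin M, (z i = (r : ℕ) + 1) ↔ r = r0 := by
        intro r
        constructor
        · intro h; apply Fin.ext; simp [hr0]; omega
        · intro h; subst h; simp [hr0]; omega
      calc ∑ r : Fin M, (if z i = (r : ℕ) + 1 then (r : ℕ) + 1 else 0)
          = ∑ r : Fin M, (if r = r0 then z i else 0) := by
            refine Finset.sum_congr rfl fun r _ => ?_
            by_cases h : z i = (r : ℕ) + 1
            · rw [if_pos h, if_pos ((key r).mp h)]; omega
            · rw [if_neg h, if_neg (fun hr => h ((key r).mpr hr))]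
        _ = z i := by simp
  -- erase condition
  have hb : (∀ i : Fin k, z i ≤ ∑ ℓ ∈ Finset.univ.erase i, z ℓ)
      ↔ ∀ i : Fin k, 2 * z i ≤ ∑ j, z j := by
    constructor <;> intro h i <;>
    · have hadd := Finset.add_sum_erase Finset.univ z (Finset.mem_univ i)
      have := h i; omega
  -- splitting lemma
  have hsplit : ∀ c : Fin M, u c = 1 → (∀ r : Fin M, c < r → u r = 0) →
      ∑ r : Fin M, ((r : ℕ) + 1) * u r
        = ((c : ℕ) + 1) + ∑ r ∈ Finset.univ.filter (fun r : Fin M => r < c), ((r : ℕ) + 1) * u r := by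
    intro c hc1 hc2
    rw [← Finset.sum_filter_add_sum_filter_not Finset.univ (fun r : Fin M => r < c)
      (fun r => ((r : ℕ) + 1) * u r)]
    have h2 : ∑ r ∈ Finset.univ.filter (fun r : Fin M => ¬ r < c), ((r : ℕ) + 1) * u r
        = ((c : ℕ) + 1) := by
      rw [Finset.sum_eq_single_of_mem c (by simp)]
      · rw [hc1, mul_one]
      · intro r hr hne
        rw [Finset.mem_filter] at hr
        have : c < r := lt_of_le_of_ne (not_lt.mp hr.2) (Ne.symm hne)
        rw [hc2 r this, mul_zero]
    rw [h2, add_comm]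
  -- u c ≥ 1 iff exists i with z i = c+1
  have hmem : ∀ i : Fin k, z i ≠ 0 → ∃ c : Fin M, z i = (c : ℕ) + 1 ∧ 1 ≤ u c := by
    intro i h0
    have hzi : z i - 1 < M := by have := hz i; omega
    refine ⟨⟨z i - 1, hzi⟩, by simp; omega, ?_⟩
    rw [hu]
    refine Finset.card_pos.mpr ⟨i, ?_⟩
    simp; omega
  constructor
  · rintro ⟨hev, hcone⟩
    constructor
    · -- parity
      rw [hS] at hev
      rw [Nat.even_iff] at hev ⊢
      rw [Finset.sum_nat_mod] at hev ⊢
      rw [← Finset.sum_filter_add_sum_filter_not Finset.univ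
        (fun r : Fin M => Odd ((r : ℕ) + 1)) (fun r => (((r : ℕ) + 1) * u r) % 2)] at hev
      have he1 : ∑ r ∈ Finset.univ.filter (fun r : Fin M => Odd ((r : ℕ) + 1)),
          (((r : ℕ) + 1) * u r) % 2 = ∑ r ∈ Finset.univ.filter (fun r : Fin M => Odd ((r : ℕ) + 1)), u r % 2 := by
        refine Finset.sum_congr rfl fun r hr => ?_
        rw [Finset.mem_filter] at hr
        have := Nat.odd_iff.mp hr.2
        rw [Nat.mul_mod, this, one_mul, Nat.mod_mod_of_dvd _ (dvd_refl 2)]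
      have he2 : ∑ r ∈ Finset.univ.filter (fun r : Fin M => ¬ Odd ((r : ℕ) + 1)),
          (((r : ℕ) + 1) * u r) % 2 = 0 := by
        refine Finset.sum_eq_zero fun r hr => ?_
        rw [Finset.mem_filter] at hr
        have : ((r : ℕ) + 1) % 2 = 0 := by
          rcases Nat.even_or_odd ((r : ℕ) + 1) with h | h
          · exact Nat.even_iff.mp h
          · exact absurd h hr.2
        rw [Nat.mul_mod, this, zero_mul, Nat.zero_mod]
      rw [he1, he2, add_zero] at hev
      exact hev
    · -- S-3
      intro c ⟨hc1, hc2⟩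
      rw [hb, hS] at hcone
      have hex : ∃ i : Fin k, z i = (c : ℕ) + 1 := by
        have := hu c ▸ hc1
        have hpos : 0 < (Finset.univ.filter fun i : Fin k => z i = (c : ℕ) + 1).card := by omega
        obtain ⟨i, hi⟩ := Finset.card_pos.mp hpos
        rw [Finset.mem_filter] at hi
        exact ⟨i, hi.2⟩
      obtain ⟨i, hi⟩ := hex
      have := hcone i
      rw [hi, hsplit c hc1 hc2] at this
      omega
  · rintro ⟨hev, hS3⟩
    constructor
    · rw [hS, Nat.even_iff, Finset.sum_nat_mod,
        ← Finset.sum_filter_add_sum_filter_not Finset.univ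
        (fun r : Fin M => Odd ((r : ℕ) + 1)) (fun r => (((r : ℕ) + 1) * u r) % 2)]
      have he1 : ∑ r ∈ Finset.univ.filter (fun r : Fin M => Odd ((r : ℕ) + 1)),
          (((r : ℕ) + 1) * u r) % 2 = ∑ r ∈ Finset.univ.filter (fun r : Fin M => Odd ((r : ℕ) + 1)), u r % 2 := by
        refine Finset.sum_congr rfl fun r hr => ?_
        rw [Finset.mem_filter] at hr
        have := Nat.odd_iff.mp hr.2
        rw [Nat.mul_mod, this, one_mul, Nat.mod_mod_of_dvd _ (dvd_refl 2)]
      have he2 : ∑ r ∈ Finset.univ.filter (fun r : Fin M => ¬ Odd ((r : ℕ) + 1)),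
          (((r : ℕ) + 1) * u r) % 2 = 0 := by
        refine Finset.sum_eq_zero fun r hr => ?_
        rw [Finset.mem_filter] at hr
        have : ((r : ℕ) + 1) % 2 = 0 := by
          rcases Nat.even_or_odd ((r : ℕ) + 1) with h | h
          · exact Nat.even_iff.mp h
          · exact absurd h hr.2
        rw [Nat.mul_mod, this, zero_mul, Nat.zero_mod]
      rw [he1, he2, add_zero, ← Finset.sum_nat_mod, ← Nat.even_iff]
      exact hev
    · rw [hb, hS]
      intro i
      by_cases h0 : z i = 0
      · simp [h0]
      · obtain ⟨c, hic, huc⟩ := hmem i h0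
        rw [hic]
        by_cases hcase : u c = 1 ∧ ∀ r : Fin M, c < r → u r = 0
        · have := hS3 c hcase
          rw [hsplit c hcase.1 hcase.2]
          omega
        · push_neg at hcase
          by_cases hc1 : u c = 1
          · obtain ⟨r, hcr, hur⟩ := hcase hc1
            have hne : c ≠ r := ne_of_lt hcr
            have hsub : ({c, r} : Finset (Fin M)) ⊆ Finset.univ := Finset.subset_univ _
            have hle : ∑ x ∈ ({c, r} : Finset (Fin M)), ((x : ℕ) + 1) * u x
                ≤ ∑ x : Fin M, ((x : ℕ) + 1) * u x :=
              Finset.sum_le_sum_of_subset hsub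
            rw [Finset.sum_pair hne] at hle
            have h1 : ((c : ℕ) + 1) * 1 ≤ ((c : ℕ) + 1) * u c := Nat.mul_le_mul_left _ huc
            have h2 : ((r : ℕ) + 1) * 1 ≤ ((r : ℕ) + 1) * u r :=
              Nat.mul_le_mul_left _ (Nat.one_le_iff_ne_zero.mpr hur)
            have hcr' : (c : ℕ) < (r : ℕ) := hcr
            omega
          · have huc2 : 2 ≤ u c := by omega
            have hle : ((c : ℕ) + 1) * u c ≤ ∑ x : Fin M, ((x : ℕ) + 1) * u x :=
              Finset.single_le_sum (f := fun x : Fin M => ((x : ℕ) + 1) * u x) (fun x _ => Nat.zero_le _) (Finset.mem_univ c)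
            have h1 : ((c : ℕ) + 1) * 2 ≤ ((c : ℕ) + 1) * u c := Nat.mul_le_mul_left _ huc2
            omega
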